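/- arXiv:1307.0040 — 5 statements merged into one kernel-verified Lean document; each statement's English description precedes it below -/
import Mathlib

section
/- Suppose S_0, S_1, S_2, ... are pairwise disjoint subsets of ℕ and I ⊆ ℕ has upper density strictly greater than q₀. Then for all sufficiently large j, the upper density of I \ S_j is strictly greater than q₀. -/
open Filter

noncomputable def pdens (S : Set ℕ) (n : ℕ) : ℝ := (S ∩ Set.Iio n).ncard / n

noncomputable def lowerDensity (S : Set ℕ) : ℝ := liminf (pdens S) atTop

noncomputable def upperDensity (S : Set ℕ) : ℝ := limsup (pdens S) atTop

lemma pdens_nonneg (S : Set ℕ) (n : ℕ) : 0 ≤ pdens S n :=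
  div_nonneg (Nat.cast_nonneg _) (Nat.cast_nonneg _)

lemma pdens_le_one (S : Set ℕ) (n : ℕ) : pdens S n ≤ 1 := by
  rcases Nat.eq_zero_or_pos n with h | h
  · simp [pdens, h]
  · rw [pdens, div_le_one (by positivity)]
    have : (S ∩ Set.Iio n).ncard ≤ (Set.Iio n).ncard :=
      Set.ncard_le_ncard Set.inter_subset_right (Set.finite_Iio n)
    have h2 : (Set.Iio n).ncard = n := by
      rw [← Nat.card_coe_set_eq, Nat.card_eq_card_toFinset]
      simp
    exact_mod_cast this.trans_eq h2

lemma pdens_bddBelow (S : Set ℕ) : IsBoundedUnder (· ≥ ·) atTop (pdens S) :=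
  isBoundedUnder_of ⟨0, fun n => pdens_nonneg S n⟩

lemma pdens_bddAbove (S : Set ℕ) : IsBoundedUnder (· ≤ ·) atTop (pdens S) :=
  isBoundedUnder_of ⟨1, fun n => pdens_le_one S n⟩

lemma pdens_subadd (I T : Set ℕ) (n : ℕ) : pdens I n ≤ pdens (I \ T) n + pdens T n := by
  rcases Nat.eq_zero_or_pos n with h | h
  · simp [pdens, h]
  · unfold pdens
    rw [← add_div, div_le_div_iff_of_pos_right (by exact_mod_cast h)]
    have hsub : I ∩ Set.Iio n ⊆ ((I \ T) ∩ Set.Iio n) ∪ (T ∩ Set.Iio n) := by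
      intro x hx
      by_cases hxT : x ∈ T
      · exact Or.inr ⟨hxT, hx.2⟩
      · exact Or.inl ⟨⟨hx.1, hxT⟩, hx.2⟩
    have h1 : (I ∩ Set.Iio n).ncard ≤ (((I \ T) ∩ Set.Iio n) ∪ (T ∩ Set.Iio n)).ncard :=
      Set.ncard_le_ncard hsub (Set.Finite.union
        ((Set.finite_Iio n).inter_of_right _) ((Set.finite_Iio n).inter_of_right _))
    have h2 := Set.ncard_union_le ((I \ T) ∩ Set.Iio n) (T ∩ Set.Iio n)
    exact_mod_cast h1.trans h2

lemma pdens_sum_le (S : ℕ → Set ℕ) (hS : ∀ i j : ℕ, i ≠ j → Disjoint (S i) (S j))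
    (T : Finset ℕ) (n : ℕ) : ∑ j ∈ T, pdens (S j) n ≤ 1 := by
  classical
  rcases Nat.eq_zero_or_pos n with h | h
  · simp [pdens, h]
  · unfold pdens
    rw [← Finset.sum_div, div_le_one (by exact_mod_cast h)]
    set F : ℕ → Finset ℕ := fun j => (Finset.range n).filter (· ∈ S j) with hF
    have hcard : ∀ j, ((S j ∩ Set.Iio n).ncard : ℝ) = ((F j).card : ℝ) := by
      intro j
      congr 1
      have : S j ∩ Set.Iio n = ↑(F j) := by
        ext x; simp [hF, Finset.mem_filter, and_comm]
      rw [this, Set.ncard_coe_finset]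
    calc ∑ j ∈ T, ((S j ∩ Set.Iio n).ncard : ℝ) = ∑ j ∈ T, ((F j).card : ℝ) := by
          exact Finset.sum_congr rfl fun j _ => hcard j
      _ = ((∑ j ∈ T, (F j).card : ℕ) : ℝ) := by push_cast; ring
      _ = ((T.biUnion F).card : ℝ) := by
          rw [Finset.card_biUnion]
          intro i hi j hj hij
          exact Finset.disjoint_filter_filter' _ _ (hS i j hij)
      _ ≤ (n : ℝ) := by
          have : T.biUnion F ⊆ Finset.range n := by
            intro x hx
            obtain ⟨j, -, hxj⟩ := Finset.mem_biUnion.1 hx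
            exact (Finset.mem_filter.1 hxj).1
          have := Finset.card_le_card this
          simp only [Finset.card_range] at this
          exact_mod_cast this

theorem stmt7 (S : ℕ → Set ℕ) (hS : ∀ i j : ℕ, i ≠ j → Disjoint (S i) (S j))
    (I : Set ℕ) (q₀ : ℝ) (h : q₀ < upperDensity I) :
    ∀ᶠ j in atTop, q₀ < upperDensity (I \ S j) := by
  classical
  set d := upperDensity I with hd
  set ε : ℝ := (d - q₀) / 3 with hε
  have hεpos : 0 < ε := by simp only [hε]; linarith
  set B : Set ℕ := {j | upperDensity (I \ S j) ≤ q₀} with hB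
  have hBfin : B.Finite := by
    by_contra hinf
    have hinf : B.Infinite := hinf
    obtain ⟨k, hk⟩ := exists_nat_gt (1 / ε)
    obtain ⟨T, hTB, hTcard⟩ := hinf.exists_subset_card_eq k
    -- for each j in T, eventually pdens (I \ S j) n < q₀ + ε
    have hev : ∀ᶠ n in atTop, ∀ j ∈ T, pdens (I \ S j) n < q₀ + ε := by
      rw [eventually_all_finset]
      intro j hj
      have hjB : upperDensity (I \ S j) ≤ q₀ := hTB hj
      exact eventually_lt_of_limsup_lt (lt_of_le_of_lt hjB (by linarith)) (pdens_bddAbove _)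
    have hfreq : ∃ᶠ n in atTop, d - ε < pdens I n :=
      frequently_lt_of_lt_limsup (pdens_bddBelow I).isCoboundedUnder_le
        (by simp only [hε]; change d - (d - q₀)/3 < d; linarith)
    obtain ⟨n, hn1, hn2⟩ := (hfreq.and_eventually hev).exists
    -- for each j in T, pdens (S j) n > ε
    have key : ∀ j ∈ T, ε < pdens (S j) n := by
      intro j hj
      have h1 := pdens_subadd I (S j) n
      have h2 := hn2 j hj
      have : d - q₀ - 2 * ε = ε := by simp only [hε]; ring
      linarith
    have hsum := pdens_sum_le S hS T n
    have : (k : ℝ) * ε < ∑ j ∈ T, pdens (S j) n := by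
      have := Finset.sum_lt_sum_of_nonempty ?ne key
      · rwa [Finset.sum_const, hTcard, nsmul_eq_mul] at this
      case ne =>
        rw [← Finset.card_pos, hTcard]
        by_contra hk0
        push_neg at hk0
        interval_cases k
        · simp at hk
          nlinarith [one_div_pos.mpr hεpos]
    have hk' : 1 < (k : ℝ) * ε := by
      rw [div_lt_iff₀ hεpos] at hk
      linarith
    linarith
  obtain ⟨N, hN⟩ := hBfin.bddAbove
  filter_upwards [eventually_gt_atTop N] with j hj
  by_contra hcon
  push_neg at hcon
  exact absurd (hN (Set.mem_setOf.2 hcon)) (not_le.2 hj)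
end

section
/- Let F ⊆ ℕ be a finite set, let a, d ∈ ℕ, and let r be a rational number with 0 < r < 1. Then there exists a finite set G ⊇ F and a natural number c such that: G ∩ [0,a) = F ∩ [0,a); c > d; |G ∩ [0,c)|/c = r; and G ∩ [a,∞) is an initial segment of [a,∞) (i.e., G ∩ [a,∞) = [a,b) for some b ≥ a). -/
open Filter

theorem stmt8 (F : Finset ℕ) (a d : ℕ) (r : ℚ) (h0 : 0 < r) (h1 : r < 1) :
    ∃ (G : Finset ℕ) (c b : ℕ), F ⊆ G ∧ (∀ x, x < a → (x ∈ G ↔ x ∈ F)) ∧ d < c ∧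
      ((G.filter (fun x => x < c)).card : ℚ) / c = r ∧
      a ≤ b ∧ (∀ x, a ≤ x → (x ∈ G ↔ x < b)) := by
  have hnum : 0 < r.num := Rat.num_pos.mpr h0
  set n : ℕ := r.num.toNat with hn
  set q : ℕ := r.den with hq
  have hn1 : 1 ≤ n := by omega
  have hnq : n < q := by
    have h : (r.num : ℚ) < (r.den : ℚ) := by
      rw [← Rat.num_div_den r, div_lt_one (by positivity)] at h1
      exact h1
    have h' : r.num < (r.den : ℤ) := by exact_mod_cast h
    omega
  set k : ℕ := (F.filter (fun x => x < a)).card with hk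
  set M : ℕ := F.sup id + 1 with hM
  set t : ℕ := a + d + 1 + k + M with ht
  set N : ℕ := n * t with hN
  set b : ℕ := a + (N - k) with hb
  set c : ℕ := q * t with hc
  have htpos : 0 < t := by omega
  have hNt : t ≤ N := Nat.le_mul_of_pos_left t (by omega)
  have hNkM : k + M ≤ N := le_trans (by omega) hNt
  have hbc : b ≤ c := by
    have h2 : N + t ≤ c := by
      calc N + t = (n + 1) * t := by ring
        _ ≤ q * t := Nat.mul_le_mul_right t (by omega)
    omega
  have hMb : M ≤ b := by omega
  have hFb : ∀ x ∈ F, x < b := by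
    intro x hx
    have : x ≤ F.sup id := Finset.le_sup (f := id) hx
    omega
  refine ⟨F.filter (fun x => x < a) ∪ Finset.Ico a b, c, b, ?_, ?_, ?_, ?_, ?_, ?_⟩
  · intro x hx
    simp only [Finset.mem_union, Finset.mem_filter, Finset.mem_Ico]
    rcases lt_or_ge x a with h | h
    · exact Or.inl ⟨hx, h⟩
    · exact Or.inr ⟨h, hFb x hx⟩
  · intro x hx
    simp only [Finset.mem_union, Finset.mem_filter, Finset.mem_Ico]
    constructor
    · rintro (⟨h, _⟩ | ⟨h, _⟩) <;> [exact h; omega]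
    · intro h; exact Or.inl ⟨h, hx⟩
  · calc d < t := by omega
      _ ≤ c := Nat.le_mul_of_pos_left t (by omega)
  · have hfilt : ((F.filter (fun x => x < a) ∪ Finset.Ico a b).filter (fun x => x < c))
        = F.filter (fun x => x < a) ∪ Finset.Ico a b := by
      apply Finset.filter_true_of_mem
      intro x hx
      simp only [Finset.mem_union, Finset.mem_filter, Finset.mem_Ico] at hx
      rcases hx with ⟨_, h⟩ | ⟨_, h⟩ <;> omega
    rw [hfilt]
    have hdisj : Disjoint (F.filter (fun x => x < a)) (Finset.Ico a b) := by
      rw [Finset.disjoint_left]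
      intro x hx hx'
      simp only [Finset.mem_filter] at hx
      simp only [Finset.mem_Ico] at hx'
      omega
    rw [Finset.card_union_of_disjoint hdisj, Nat.card_Ico, ← hk]
    have hcard : k + (b - a) = N := by omega
    rw [hcard]
    have hrn : (n : ℚ) = r.num := by
      rw [hn]; exact_mod_cast Int.toNat_of_nonneg hnum.le
    have hqc : (q : ℚ) ≠ 0 := by positivity
    have htc : (t : ℚ) ≠ 0 := by positivity
    rw [hN, hc]
    push_cast
    rw [mul_div_mul_right _ _ htc, hrn, hq, Rat.num_div_den]
  · omega
  · intro x hx
    simp only [Finset.mem_union, Finset.mem_filter, Finset.mem_Ico]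
    constructor
    · rintro (⟨_, h⟩ | ⟨_, h⟩) <;> omega
    · intro h; exact Or.inr ⟨hx, h⟩
end

section
/- Let D ⊆ ℕ be a nonempty finite set, and let T = {n ∈ ℕ : D_n ∩ D = ∅}, where D_n denotes the finite set with binary canonical index n (i.e., k ∈ D_n iff the k-th binary digit of n is 1). Then T has asymptotic density 2^{-|D|}. -/
open Filter

-- counting function
def cnt (D : Finset ℕ) (N : ℕ) : ℕ :=
  ((Finset.range N).filter (fun n => ∀ k ∈ D, n.testBit k = false)).card

lemma cnt_mono (D : Finset ℕ) : Monotone (cnt D) := by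
  intro a b hab
  exact Finset.card_le_card (Finset.filter_subset_filter _
    (Finset.range_subset_range.mpr hab))

lemma cnt_block (m : ℕ) : ∀ D : Finset ℕ, (∀ k ∈ D, k < m) →
    cnt D (2 ^ m) = 2 ^ (m - D.card) := by
  induction m with
  | zero =>
    intro D hDm
    have hDe : D = ∅ := by
      ext k; simp only [Finset.notMem_empty, iff_false]
      intro hk; exact absurd (hDm k hk) (by omega)
    subst hDe
    simp [cnt]
  | succ m ih =>
    intro D hDm
    have hsplit : (2:ℕ) ^ (m+1) = 2 ^ m + 2 ^ m := by ring
    have key : ∀ x < 2 ^ m, ∀ k < m, (2 ^ m + x).testBit k = x.testBit k := by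
      intro x hx k hk
      have := Nat.testBit_two_pow_mul_add 1 hx k
      simpa [hk] using this
    have keym : ∀ x < 2 ^ m, (2 ^ m + x).testBit m = true := by
      intro x hx
      have := Nat.testBit_two_pow_mul_add 1 hx m
      simpa using this
    rw [cnt, hsplit, Finset.range_add, Finset.filter_union, Finset.card_union_of_disjoint
      (Finset.disjoint_filter_filter (Finset.disjoint_range_addLeftEmbedding _ _)),
      Finset.filter_map, Finset.card_map]
    by_cases hm : m ∈ D
    · -- second half empty; first half equals cnt (D.erase m) (2^m)
      have h2 : (Finset.range (2 ^ m)).filter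
          ((fun n => ∀ k ∈ D, n.testBit k = false) ∘ (addLeftEmbedding (2 ^ m))) = ∅ := by
        rw [Finset.filter_eq_empty_iff]
        intro x hx
        simp only [Finset.mem_range] at hx
        simp only [Function.comp, addLeftEmbedding_apply]
        push_neg
        exact ⟨m, hm, by simp [keym x hx]⟩
      have h1 : (Finset.range (2 ^ m)).filter (fun n => ∀ k ∈ D, n.testBit k = false)
          = (Finset.range (2 ^ m)).filter (fun n => ∀ k ∈ D.erase m, n.testBit k = false) := by
        apply Finset.filter_congr
        intro x hx
        simp only [Finset.mem_range] at hx
        constructor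
        · intro h k hk; exact h k (Finset.mem_of_mem_erase hk)
        · intro h k hk
          by_cases hkm : k = m
          · subst hkm
            exact Nat.testBit_lt_two_pow (hx.trans_le (le_refl _))
          · exact h k (Finset.mem_erase.mpr ⟨hkm, hk⟩)
      rw [h2, h1]
      have := ih (D.erase m) (fun k hk => by
        have hkD := Finset.mem_of_mem_erase hk
        have hkm := (Finset.mem_erase.mp hk).1
        have := hDm k hkD
        omega)
      rw [cnt] at this
      rw [this]
      have hcard : D.card = (D.erase m).card + 1 := by
        rw [Finset.card_erase_of_mem hm]
        have := Finset.card_pos.mpr ⟨m, hm⟩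
        omega
      have hle : (D.erase m).card ≤ m := by
        have : D.erase m ⊆ Finset.range m := by
          intro k hk
          simp only [Finset.mem_range]
          have := hDm k (Finset.mem_of_mem_erase hk)
          have := (Finset.mem_erase.mp hk).1
          omega
        simpa using Finset.card_le_card this
      rw [hcard]
      simp only [Finset.card_empty, add_zero]
      congr 1
      omega
    · -- m ∉ D : both halves count cnt D (2^m)
      have hDm' : ∀ k ∈ D, k < m := by
        intro k hk
        have := hDm k hk
        rcases Nat.lt_succ_iff_lt_or_eq.mp this with h | h
        · exact h
        · exact absurd (h ▸ hk) hm
      have h2 : (Finset.range (2 ^ m)).filter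
          ((fun n => ∀ k ∈ D, n.testBit k = false) ∘ (addLeftEmbedding (2 ^ m)))
          = (Finset.range (2 ^ m)).filter (fun n => ∀ k ∈ D, n.testBit k = false) := by
        apply Finset.filter_congr
        intro x hx
        simp only [Finset.mem_range] at hx
        simp only [Function.comp, addLeftEmbedding_apply]
        constructor
        · intro h k hk; rw [← key x hx k (hDm' k hk)]; exact h k hk
        · intro h k hk; rw [key x hx k (hDm' k hk)]; exact h k hk
      rw [h2]
      have := ih D hDm'
      rw [cnt] at this
      rw [this]
      have hle : D.card ≤ m := by
        have : D ⊆ Finset.range m := fun k hk => Finset.mem_range.mpr (hDm' k hk)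
        simpa using Finset.card_le_card this
      have : m + 1 - D.card = (m - D.card) + 1 := by omega
      rw [this]
      ring

lemma cnt_mul (D : Finset ℕ) (m : ℕ) (hDm : ∀ k ∈ D, k < m) (q : ℕ) :
    cnt D (q * 2 ^ m) = q * cnt D (2 ^ m) := by
  induction q with
  | zero => simp [cnt]
  | succ q ih =>
    have hq : (q + 1) * 2 ^ m = q * 2 ^ m + 2 ^ m := by ring
    rw [hq, cnt, Finset.range_add, Finset.filter_union, Finset.card_union_of_disjoint
      (Finset.disjoint_filter_filter (Finset.disjoint_range_addLeftEmbedding _ _)),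
      Finset.filter_map, Finset.card_map]
    have h2 : (Finset.range (2 ^ m)).filter
        ((fun n => ∀ k ∈ D, n.testBit k = false) ∘ (addLeftEmbedding (q * 2 ^ m)))
        = (Finset.range (2 ^ m)).filter (fun n => ∀ k ∈ D, n.testBit k = false) := by
      apply Finset.filter_congr
      intro x hx
      simp only [Finset.mem_range] at hx
      simp only [Function.comp, addLeftEmbedding_apply]
      have key : ∀ k < m, (q * 2 ^ m + x).testBit k = x.testBit k := by
        intro k hk
        have := Nat.testBit_two_pow_mul_add q hx k
        rw [mul_comm] at this
        simpa [hk] using this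
      constructor
      · intro h k hk; rw [← key k (hDm k hk)]; exact h k hk
      · intro h k hk; rw [key k (hDm k hk)]; exact h k hk
    rw [h2]
    show cnt D (q * 2 ^ m) + cnt D (2 ^ m) = _
    rw [ih]; ring

lemma pdens_eq (D : Finset ℕ) (n : ℕ) :
    pdens {n : ℕ | ∀ k ∈ D, n.testBit k = false} n = (cnt D n : ℝ) / n := by
  have : {n : ℕ | ∀ k ∈ D, n.testBit k = false} ∩ Set.Iio n
      = ↑((Finset.range n).filter (fun x => ∀ k ∈ D, x.testBit k = false)) := by
    ext x
    simp [Finset.mem_filter, Finset.mem_range, Set.mem_Iio, and_comm]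
  rw [pdens, this, Set.ncard_coe_finset]
  rfl

theorem stmt10 (D : Finset ℕ) (hD : D.Nonempty) :
    Tendsto (pdens {n : ℕ | ∀ k ∈ D, n.testBit k = false}) atTop
      (nhds ((1 : ℝ) / 2 ^ D.card)) := by
  set m : ℕ := D.max' hD + 1 with hm
  have hDm : ∀ k ∈ D, k < m := fun k hk => Nat.lt_succ_of_le (D.le_max' k hk)
  have hdle : D.card ≤ m := by
    have : D ⊆ Finset.range m := fun k hk => Finset.mem_range.mpr (hDm k hk)
    simpa using Finset.card_le_card this
  set c : ℕ := 2 ^ (m - D.card) with hc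
  have hblock := cnt_block m D hDm
  have hL : ((1 : ℝ) / 2 ^ D.card) = (c : ℝ) / 2 ^ m := by
    rw [hc]
    push_cast
    rw [div_eq_div_iff (by positivity) (by positivity), one_mul,
      ← pow_add]
    congr 1
    omega
  rw [hL]
  rw [tendsto_iff_dist_tendsto_zero]
  apply squeeze_zero' (Eventually.of_forall (fun n => dist_nonneg))
    (g := fun n : ℕ => (c : ℝ) / n)
  · filter_upwards [eventually_ge_atTop 1] with n hpos
    rw [pdens_eq, Real.dist_eq]
    set q : ℕ := n / 2 ^ m with hq
    have h2m : (0:ℕ) < 2 ^ m := Nat.pow_pos (by norm_num)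
    have hlow : q * 2 ^ m ≤ n := Nat.div_mul_le_self n _
    have hhigh : n < (q + 1) * 2 ^ m := (Nat.div_lt_iff_lt_mul h2m).mp (Nat.lt_succ_self q)
    have hclow : q * c ≤ cnt D n := by
      calc q * c = cnt D (q * 2 ^ m) := by rw [cnt_mul D m hDm, hblock]
      _ ≤ cnt D n := cnt_mono D hlow
    have hchigh : cnt D n ≤ (q + 1) * c := by
      calc cnt D n ≤ cnt D ((q + 1) * 2 ^ m) := cnt_mono D hhigh.le
      _ = (q + 1) * c := by rw [cnt_mul D m hDm, hblock]
    have hN : (0:ℝ) < n := by exact_mod_cast hpos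
    have hM : (0:ℝ) < 2 ^ m := by positivity
    have hcR : (0:ℝ) ≤ c := by positivity
    have hA : (cnt D n : ℝ) ≤ (q + 1) * c := by exact_mod_cast hchigh
    have hA2 : (q : ℝ) * c ≤ cnt D n := by exact_mod_cast hclow
    have hB : (q : ℝ) * 2 ^ m ≤ n := by exact_mod_cast hlow
    have hB2 : (n : ℝ) ≤ (q + 1) * 2 ^ m := by exact_mod_cast hhigh.le
    rw [abs_sub_le_iff]
    constructor
    · rw [div_sub_div _ _ hN.ne' hM.ne', div_le_div_iff₀ (by positivity) hN]
      nlinarith [mul_nonneg hcR (sub_nonneg.2 hB), mul_nonneg hM.le (sub_nonneg.2 hA)]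
    · rw [div_sub_div _ _ hM.ne' hN.ne', div_le_div_iff₀ (by positivity) hN]
      nlinarith [mul_nonneg hcR (sub_nonneg.2 hB2),
        mul_nonneg hM.le (sub_nonneg.2 hA2)]
  · simpa using tendsto_const_div_atTop_nhds_zero_nat (c : ℝ)
end

section
/- If A is a computably enumerable subset of ℕ that has an asymptotic density, then for every real ε > 0 there is a computable set B ⊆ A such that the upper density of the symmetric difference A △ B is less than ε. -/
open Filter

namespace Stmt15Aux

open Nat.Partrec (Code)
open Nat.Partrec.Code

/-- count of `v < n` with `p x v = true` -/
def countB (p : ℕ → ℕ → Bool) (x n : ℕ) : ℕ :=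
  ((Finset.range n).filter fun v => p x v = true).card

lemma countB_zero (p : ℕ → ℕ → Bool) (x : ℕ) : countB p x 0 = 0 := rfl

lemma countB_succ (p : ℕ → ℕ → Bool) (x n : ℕ) :
    countB p x (n + 1) = countB p x n + (if p x n = true then 1 else 0) := by
  unfold countB
  rw [Finset.range_add_one, Finset.filter_insert]
  split
  · rw [Finset.card_insert_of_notMem fun h =>
      absurd (Finset.mem_range.1 (Finset.filter_subset _ _ h)) (lt_irrefl n)]
  · simp

lemma countB_primrec {p : ℕ → ℕ → Bool} (hp : Primrec₂ p) : Primrec₂ (countB p) := by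
  have hcond : PrimrecPred fun a : (ℕ × ℕ) × ℕ × ℕ => p a.1.1 a.2.1 = true :=
    Primrec.eq.comp (hp.comp (Primrec.fst.comp Primrec.fst) (Primrec.fst.comp Primrec.snd))
      (Primrec.const true)
  have hstep : Primrec₂ fun (a : ℕ × ℕ) (q : ℕ × ℕ) =>
      q.2 + (if p a.1 q.1 = true then 1 else 0) :=
    Primrec.nat_add.comp (Primrec.snd.comp Primrec.snd)
      (Primrec.ite hcond (Primrec.const 1) (Primrec.const 0))
  have h : Primrec fun a : ℕ × ℕ =>
      Nat.rec (motive := fun _ => ℕ) 0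
        (fun v ih => ih + (if p a.1 v = true then 1 else 0)) a.2 :=
    Primrec.nat_rec' Primrec.snd (Primrec.const 0) hstep
  refine h.of_eq fun a => ?_
  induction a.2 with
  | zero => rfl
  | succ n ih => rw [countB_succ]; simp [ih]

lemma pow2_primrec : Primrec fun k : ℕ => 2 ^ k := by
  have h : Primrec fun k : ℕ =>
      Nat.rec (motive := fun _ => ℕ) 1 (fun _ ih => 2 * ih) k :=
    Primrec.nat_rec' Primrec.id (Primrec.const 1)
      ((Primrec.nat_mul.comp (Primrec.const 2) (Primrec.snd.comp Primrec.snd)).to₂)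
  refine h.of_eq fun k => ?_
  induction k with
  | zero => rfl
  | succ n ih => simp [pow_succ, ih]; ring

def cntP (c : Code) : ℕ → ℕ → Bool := fun s x => (evaln s c x).isSome

lemma cntP_primrec (c : Code) : Primrec₂ (cntP c) :=
  Primrec.option_isSome.comp
    (primrec_evaln.comp ((Primrec.fst.pair (Primrec.const c)).pair Primrec.snd))

/-- number of elements below `v` enumerated into the set by stage `s` -/
def cnt (c : Code) (s v : ℕ) : ℕ := countB (cntP c) s v

lemma cnt_primrec (c : Code) : Primrec₂ (cnt c) := countB_primrec (cntP_primrec c)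

def badP (c : Code) (a b K : ℕ) : ℕ → ℕ → Bool :=
  fun s v => decide (b * (cnt c s v + K) < a * v)

lemma badP_primrec (c : Code) (a b K : ℕ) : Primrec₂ (badP c a b K) :=
  PrimrecPred.decide <| Primrec.nat_lt.comp
    (Primrec.nat_mul.comp (Primrec.const b)
      (Primrec.nat_add.comp ((cnt_primrec c).comp Primrec.fst Primrec.snd) (Primrec.const K)))
    (Primrec.nat_mul.comp (Primrec.const a) Primrec.snd)

def condB (c : Code) (a b K : ℕ) (k s : ℕ) : Bool :=
  countB (badP c a b K) s (2 ^ (k + 1) + 1) == 0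

lemma condB_iff (c : Code) (a b K k s : ℕ) :
    condB c a b K k s = true ↔ ∀ v ≤ 2 ^ (k + 1), a * v ≤ b * (cnt c s v + K) := by
  unfold condB countB badP
  rw [beq_iff_eq, Finset.card_eq_zero, Finset.filter_eq_empty_iff]
  constructor
  · intro h v hv
    have := h (Finset.mem_range.2 (Nat.lt_succ_of_le hv))
    simpa [not_lt] using this
  · intro h v hv
    have := h v (Nat.lt_succ_iff.1 (Finset.mem_range.1 hv))
    simp [not_lt, this]

lemma condB_primrec (c : Code) (a b K : ℕ) : Primrec₂ (condB c a b K) := by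
  have h1 : Primrec fun q : ℕ × ℕ => countB (badP c a b K) q.2 (2 ^ (q.1 + 1) + 1) :=
    (countB_primrec (badP_primrec c a b K)).comp Primrec.snd
      (Primrec.succ.comp (pow2_primrec.comp (Primrec.succ.comp Primrec.fst)))
  exact Primrec.beq.comp h1 (Primrec.const 0)

theorem computable_find {p : ℕ → ℕ → Bool} (hp : Computable₂ p)
    (hex : ∀ k, ∃ s, p k s = true) : Computable fun k => Nat.find (hex k) := by
  have H : Partrec fun k => Nat.rfind fun s => (p k s : Part Bool) :=
    Partrec.rfind hp.partrec₂
  refine H.of_eq_tot fun k => ?_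
  refine Nat.mem_rfind.2 ⟨?_, fun {m} hm => ?_⟩
  · exact Part.mem_some_iff.2 (Nat.find_spec (hex k)).symm
  · refine Part.mem_some_iff.2 ?_
    have := Nat.find_min (hex k) hm
    simp [Bool.not_eq_true] at this
    simp [this]

lemma sq_le_two_pow : ∀ k : ℕ, 4 ≤ k → k ^ 2 ≤ 2 ^ k := by
  intro k hk
  induction k, hk using Nat.le_induction with
  | base => norm_num
  | succ n hn ih =>
    have h1 : (n + 1) ^ 2 ≤ 2 * n ^ 2 := by nlinarith
    calc (n + 1) ^ 2 ≤ 2 * n ^ 2 := h1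
      _ ≤ 2 * 2 ^ n := by omega
      _ = 2 ^ (n + 1) := by ring

end Stmt15Aux

open Stmt15Aux Nat.Partrec.Code

set_option maxHeartbeats 2000000 in
theorem stmt15 (A : Set ℕ) (hA : REPred (· ∈ A)) (d : ℝ)
    (hd : Tendsto (pdens A) atTop (nhds d)) (ε : ℝ) (hε : 0 < ε) :
    ∃ B : Set ℕ, ComputablePred (· ∈ B) ∧ B ⊆ A ∧ upperDensity (symmDiff A B) < ε := by
  classical
  -- trivial case: density already below ε
  rcases lt_or_ge d ε with hcase | hcase
  · refine ⟨∅, ?_, Set.empty_subset A, ?_⟩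
    · refine ComputablePred.computable_iff.2 ⟨fun _ => false, Computable.const false, ?_⟩
      funext x; simp
    · have : symmDiff A (∅ : Set ℕ) = A := by
        simpa using symmDiff_bot (a := A)
      rw [upperDensity, this, hd.limsup_eq]
      exact hcase
  -- main case
  have hd0 : 0 < d := lt_of_lt_of_le hε hcase
  set η : ℝ := ε / 16 with hηdef
  have hη0 : 0 < η := by positivity
  -- get a code for A
  have hFp : Partrec fun x : ℕ => Part.assert (x ∈ A) fun _ => Part.some 0 := by
    have h := hA.map ((Computable.const (0 : ℕ)).comp Computable.fst).to₂
    refine h.of_eq fun x => Part.ext fun y => ?_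
    simp only [Part.mem_map_iff, Part.mem_assert_iff, Part.mem_some_iff]
    constructor
    · rintro ⟨u, ⟨hu, -⟩, h0⟩; exact ⟨hu, h0.symm⟩
    · rintro ⟨hu, rfl⟩; exact ⟨(), ⟨hu, trivial⟩, rfl⟩
  obtain ⟨c, hcode⟩ := exists_code.1 (Partrec.nat_iff.1 hFp)
  have hc : ∀ x, x ∈ A ↔ ∃ s, (evaln s c x).isSome = true := by
    intro x
    have h1 : x ∈ A ↔ (eval c x).Dom := by
      rw [hcode]
      exact ⟨fun h => ⟨h, trivial⟩, fun h => h.fst⟩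
    rw [h1, Part.dom_iff_mem]
    constructor
    · rintro ⟨y, hy⟩
      obtain ⟨k, hk⟩ := evaln_complete.1 hy
      exact ⟨k, Option.isSome_iff_exists.2 ⟨y, hk⟩⟩
    · rintro ⟨s, hs⟩
      obtain ⟨y, hy⟩ := Option.isSome_iff_exists.1 hs
      exact ⟨y, evaln_sound hy⟩
  -- choose a rational q with d - η < q < d
  obtain ⟨q, hq1, hq2⟩ := exists_rat_btwn (show d - η < d by linarith)
  have hq0 : (0 : ℝ) < (q : ℝ) := by
    have : ε - ε / 16 ≤ d - η := by simp only [hηdef]; linarith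
    linarith
  set a : ℕ := q.num.toNat with hadef
  set b : ℕ := q.den with hbdef
  have hb : 0 < b := q.pos
  have hbR : (0 : ℝ) < (b : ℝ) := by exact_mod_cast hb
  have hqab : (q : ℝ) = (a : ℝ) / (b : ℝ) := by
    rw [Rat.cast_def]
    congr 1
    rw [hadef]
    exact_mod_cast (Int.toNat_of_nonneg (le_of_lt (Rat.num_pos.2 (by exact_mod_cast hq0)))).symm
  -- the counting function for A
  set AfC : ℕ → ℕ := fun v => ((Finset.range v).filter (· ∈ A)).card with hAfC
  have hpdA : ∀ v : ℕ, pdens A v = (AfC v : ℝ) / v := by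
    intro v
    have h : A ∩ Set.Iio v = ↑((Finset.range v).filter (· ∈ A)) := by
      ext x; simp [Finset.mem_filter, Finset.mem_range, and_comm, Set.mem_Iio]
    rw [pdens, h, Set.ncard_coe_finset]
  -- eventual bounds from convergence
  have hev : ∀ᶠ v in atTop, pdens A v ∈ Set.Ioo (q : ℝ) (d + η) :=
    hd (Ioo_mem_nhds hq2 (by linarith))
  obtain ⟨N0, hN0⟩ := eventually_atTop.1 hev
  set N : ℕ := max N0 1 with hNdef
  have hNpos : 1 ≤ N := le_max_right _ _
  have hcard_gt : ∀ v, N ≤ v → (a : ℝ) * v ≤ (b : ℝ) * (AfC v) := by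
    intro v hv
    have hv0 : (0 : ℝ) < v := by
      have : 1 ≤ v := le_trans hNpos hv
      exact_mod_cast this
    have h1 := (hN0 v (le_trans (le_max_left _ _) hv)).1
    rw [hpdA] at h1
    have h2 : (q : ℝ) * v < AfC v := by
      have := (lt_div_iff₀ hv0).1 h1
      linarith
    rw [hqab] at h2
    have h3 : (a : ℝ) * v < (b : ℝ) * AfC v := by
      have := mul_lt_mul_of_pos_left h2 hbR
      have heq : (b : ℝ) * ((a : ℝ) / (b : ℝ) * v) = (a : ℝ) * v := by
        field_simp
      linarith [heq ▸ this]
    linarith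
  have hcard_lt : ∀ v, N ≤ v → (AfC v : ℝ) < (d + η) * v := by
    intro v hv
    have hv0 : (0 : ℝ) < v := by
      have : 1 ≤ v := le_trans hNpos hv
      exact_mod_cast this
    have h1 := (hN0 v (le_trans (le_max_left _ _) hv)).2
    rw [hpdA] at h1
    exact (div_lt_iff₀ hv0).1 h1
  -- the constant K
  set K : ℕ := a * N with hKdef
  have hK : ∀ v, a * v ≤ b * (AfC v + K) := by
    intro v
    rcases le_or_gt N v with hv | hv
    · have h1 : (a : ℝ) * v ≤ (b : ℝ) * AfC v := hcard_gt v hv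
      have h2 : a * v ≤ b * AfC v := by exact_mod_cast h1
      calc a * v ≤ b * AfC v := h2
        _ ≤ b * (AfC v + K) := Nat.mul_le_mul_left _ (Nat.le_add_right _ _)
    · calc a * v ≤ a * N := Nat.mul_le_mul_left _ (le_of_lt hv)
        _ = 1 * K := by rw [hKdef, one_mul]
        _ ≤ b * (AfC v + K) := Nat.mul_le_mul hb (Nat.le_add_left _ _)
  -- capture stages
  have hcap : ∀ V : ℕ, ∃ s, ∀ x < V, x ∈ A → (evaln s c x).isSome = true := by
    intro V
    induction V with
    | zero => exact ⟨0, fun x hx => absurd hx (Nat.not_lt_zero x)⟩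
    | succ V ih =>
      obtain ⟨s, hs⟩ := ih
      by_cases hV : V ∈ A
      · obtain ⟨s', hs'⟩ := (hc V).1 hV
        refine ⟨max s s', fun x hx hxA => ?_⟩
        rcases Nat.lt_succ_iff_lt_or_eq.1 hx with h | rfl
        · obtain ⟨y, hy⟩ := Option.isSome_iff_exists.1 (hs x h hxA)
          exact Option.isSome_iff_exists.2 ⟨y, evaln_mono (le_max_left _ _) hy⟩
        · obtain ⟨y, hy⟩ := Option.isSome_iff_exists.1 hs'
          exact Option.isSome_iff_exists.2 ⟨y, evaln_mono (le_max_right _ _) hy⟩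
      · refine ⟨s, fun x hx hxA => ?_⟩
        rcases Nat.lt_succ_iff_lt_or_eq.1 hx with h | rfl
        · exact hs x h hxA
        · exact absurd hxA hV
  -- existence of good stages for each block
  have hAfC_le_cnt : ∀ (s V : ℕ), (∀ x < V, x ∈ A → (evaln s c x).isSome = true) →
      ∀ v ≤ V, AfC v ≤ cnt c s v := by
    intro s V hs v hv
    refine Finset.card_le_card (s := (Finset.range v).filter (· ∈ A))
      (t := (Finset.range v).filter fun x => cntP c s x = true) fun x hx => ?_
    rcases Finset.mem_filter.1 hx with ⟨hxr, hxA⟩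
    refine Finset.mem_filter.2 ⟨hxr, ?_⟩
    exact hs x (lt_of_lt_of_le (Finset.mem_range.1 hxr) hv) hxA
  have hexc : ∀ k, ∃ s, condB c a b K k s = true := by
    intro k
    obtain ⟨s, hs⟩ := hcap (2 ^ (k + 1))
    refine ⟨s, (condB_iff c a b K k s).2 fun v hv => ?_⟩
    calc a * v ≤ b * (AfC v + K) := hK v
      _ ≤ b * (cnt c s v + K) := by
          have := hAfC_le_cnt s (2 ^ (k + 1)) hs v hv
          exact Nat.mul_le_mul_left _ (by omega)
  set g : ℕ → ℕ := fun k => Nat.find (hexc k) with hgdef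
  have hgood : ∀ k v, v ≤ 2 ^ (k + 1) → a * v ≤ b * (cnt c (g k) v + K) :=
    fun k => (condB_iff c a b K k (g k)).1 (Nat.find_spec (hexc k))
  -- the dyadic logarithm
  have hlgex : ∀ x : ℕ, ∃ k, decide (x < 2 ^ (k + 1)) = true := by
    intro x
    exact ⟨x, decide_eq_true (lt_of_lt_of_le (Nat.lt_two_pow_self (n := x))
      (Nat.pow_le_pow_right (by norm_num) (Nat.le_succ x)))⟩
  set lg : ℕ → ℕ := fun x => Nat.find (hlgex x) with hlgdef
  have hlg_spec : ∀ x, x < 2 ^ (lg x + 1) :=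
    fun x => of_decide_eq_true (Nat.find_spec (hlgex x))
  have hlg_low : ∀ x, x ≠ 0 → 2 ^ (lg x) ≤ x := by
    intro x hx
    rcases h : lg x with _ | k
    · simpa using Nat.one_le_iff_ne_zero.2 hx
    · have := Nat.find_min (hlgex x) (show k < lg x by omega)
      simp only [decide_eq_true_eq] at this
      omega
  have hlg_mono : ∀ x y, x ≤ y → lg x ≤ lg y := by
    intro x y hxy
    exact Nat.find_min' (hlgex x) (decide_eq_true (lt_of_le_of_lt hxy (hlg_spec y)))
  have hlg_ge : ∀ M n, 2 ^ M ≤ n → M ≤ lg n := by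
    intro M n hMn
    by_contra h
    push_neg at h
    have : n < 2 ^ M := lt_of_lt_of_le (hlg_spec n)
      (Nat.pow_le_pow_right (by norm_num) (by omega))
    omega
  -- the computable set B
  set χ : ℕ → Bool := fun x =>
    Nat.casesOn (motive := fun _ => Bool) x false fun _ => (evaln (g (lg x)) c x).isSome
    with hχdef
  set B : Set ℕ := {x | χ x = true} with hBdef
  have hχ_succ : ∀ m : ℕ, χ (m + 1) = (evaln (g (lg (m + 1))) c (m + 1)).isSome := fun m => rfl
  have hχ_zero : χ 0 = false := rfl
  -- computability
  have hgcomp : Computable g := computable_find (condB_primrec c a b K).to_comp hexc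
  have hplt : Primrec fun p : ℕ × ℕ => decide (p.1 < 2 ^ (p.2 + 1)) :=
    PrimrecPred.decide <| Primrec.nat_lt.comp Primrec.fst (pow2_primrec.comp (Primrec.succ.comp Primrec.snd))
  have hplt2 : Computable₂ fun x k : ℕ => decide (x < 2 ^ (k + 1)) := Primrec₂.to_comp hplt
  have hlgcomp : Computable lg := computable_find hplt2 hlgex
  have hχcomp : Computable χ := by
    have h1 : Computable fun x : ℕ => (evaln (g (lg x)) c x).isSome :=
      Primrec.option_isSome.to_comp.comp
        (primrec_evaln.to_comp.comp
          (((hgcomp.comp hlgcomp).pair (Computable.const c)).pair Computable.id))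
    exact Computable.nat_casesOn Computable.id (Computable.const false)
      ((h1.comp Computable.fst).to₂)
  have hBcomp : ComputablePred (· ∈ B) :=
    ComputablePred.computable_iff.2 ⟨χ, hχcomp, rfl⟩
  -- B ⊆ A
  have hBsub : B ⊆ A := by
    intro x hx
    have hx' : χ x = true := hx
    rcases x with _ | m
    · rw [hχ_zero] at hx'; exact absurd hx' (by simp)
    · rw [hχ_succ] at hx'
      exact (hc (m + 1)).2 ⟨g (lg (m + 1)), hx'⟩
  refine ⟨B, hBcomp, hBsub, ?_⟩
  rw [symmDiff_of_ge hBsub]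
  -- counting
  set T : ℕ → ℕ → Finset ℕ := fun j n =>
    (Finset.range (min (2 ^ (j + 1)) n)).filter
      fun x => x ∈ A ∧ (evaln (g j) c x).isSome = false with hTdef
  have hDle : ∀ n : ℕ, 1 ≤ n →
      ((A \ B) ∩ Set.Iio n).ncard ≤ 1 + ∑ j ∈ Finset.range (lg n + 1), (T j n).card := by
    intro n hn
    have hset : (A \ B) ∩ Set.Iio n =
        ↑((Finset.range n).filter fun x => x ∈ A ∧ ¬(χ x = true)) := by
      ext x
      simp only [Set.mem_inter_iff, Set.mem_diff, Set.mem_Iio, Finset.coe_filter,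
        Finset.mem_range, Set.mem_setOf_eq, hBdef]
      tauto
    rw [hset, Set.ncard_coe_finset]
    have hsub : ((Finset.range n).filter fun x => x ∈ A ∧ ¬(χ x = true)) ⊆
        insert 0 ((Finset.range (lg n + 1)).biUnion fun j => T j n) := by
      intro x hx
      rcases Finset.mem_filter.1 hx with ⟨hxr, hxA, hxB⟩
      have hxn : x < n := Finset.mem_range.1 hxr
      rcases Nat.eq_zero_or_pos x with rfl | hx0
      · exact Finset.mem_insert_self 0 _
      · refine Finset.mem_insert_of_mem (Finset.mem_biUnion.2 ⟨lg x, ?_, ?_⟩)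
        · exact Finset.mem_range.2 (Nat.lt_succ_of_le (hlg_mono x n (le_of_lt hxn)))
        · refine Finset.mem_filter.2 ⟨Finset.mem_range.2 (lt_min (hlg_spec x) hxn), hxA, ?_⟩
          obtain ⟨m, rfl⟩ := Nat.exists_eq_succ_of_ne_zero (Nat.pos_iff_ne_zero.1 hx0)
          rw [hχ_succ] at hxB
          exact Bool.not_eq_true _ ▸ (by simpa using hxB)
    calc ((Finset.range n).filter fun x => x ∈ A ∧ ¬(χ x = true)).card
        ≤ (insert 0 ((Finset.range (lg n + 1)).biUnion fun j => T j n)).card :=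
          Finset.card_le_card hsub
      _ ≤ ((Finset.range (lg n + 1)).biUnion fun j => T j n).card + 1 :=
          Finset.card_insert_le _ _
      _ ≤ (∑ j ∈ Finset.range (lg n + 1), (T j n).card) + 1 := by
          exact Nat.add_le_add_right (Finset.card_biUnion_le) 1
      _ = 1 + ∑ j ∈ Finset.range (lg n + 1), (T j n).card := by omega
  -- per-block bound over ℕ
  have hS3 : ∀ j n : ℕ, (T j n).card + cnt c (g j) (min (2 ^ (j + 1)) n) ≤
      AfC (min (2 ^ (j + 1)) n) := by
    intro j n
    set m := min (2 ^ (j + 1)) n with hmdef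
    have hdisj : Disjoint (T j n)
        ((Finset.range m).filter fun x => cntP c (g j) x = true) := by
      rw [Finset.disjoint_left]
      intro x hx1 hx2
      have h1 := (Finset.mem_filter.1 hx1).2.2
      have h2 : (evaln (g j) c x).isSome = true := (Finset.mem_filter.1 hx2).2
      rw [h2] at h1
      exact absurd h1 (by simp)
    have hsub : (T j n) ∪ ((Finset.range m).filter fun x => cntP c (g j) x = true) ⊆
        (Finset.range m).filter (· ∈ A) := by
      intro x hx
      rcases Finset.mem_union.1 hx with hx | hx
      · rcases Finset.mem_filter.1 hx with ⟨hxr, hxA, _⟩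
        exact Finset.mem_filter.2 ⟨hxr, hxA⟩
      · rcases Finset.mem_filter.1 hx with ⟨hxr, hxP⟩
        exact Finset.mem_filter.2 ⟨hxr, (hc x).2 ⟨g j, hxP⟩⟩
    have := Finset.card_le_card hsub
    rw [Finset.card_union_of_disjoint hdisj] at this
    exact this
  -- per-block bound over ℝ
  set Cc : ℝ := (K : ℝ) + N with hCcdef
  have hCc0 : 0 ≤ Cc := by positivity
  have hTbound : ∀ j n : ℕ, ((T j n).card : ℝ) ≤ 2 * η * 2 ^ (j + 1) + Cc := by
    intro j n
    set m := min (2 ^ (j + 1)) n with hmdef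
    have hm1 : m ≤ 2 ^ (j + 1) := min_le_left _ _
    have hmR : (m : ℝ) ≤ 2 ^ (j + 1) := by exact_mod_cast hm1
    rcases le_or_gt N m with hNm | hNm
    · -- main estimate
      have h3 := hS3 j n
      have h3R : ((T j n).card : ℝ) + (cnt c (g j) m : ℝ) ≤ (AfC m : ℝ) := by
        exact_mod_cast h3
      have h4 := hgood j m hm1
      have h4R : (a : ℝ) * m ≤ (b : ℝ) * ((cnt c (g j) m : ℝ) + K) := by exact_mod_cast h4
      have h5 : ((a : ℝ) / b) * m ≤ (cnt c (g j) m : ℝ) + K := by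
        rw [div_mul_eq_mul_div, div_le_iff₀ hbR]
        linarith [h4R]
      have h6 : (d - η) * m ≤ (cnt c (g j) m : ℝ) + K := by
        have : (d - η) * m ≤ ((a : ℝ) / b) * m := by
          apply mul_le_mul_of_nonneg_right _ (Nat.cast_nonneg m)
          rw [← hqab]; linarith
        linarith
      have h7 : (AfC m : ℝ) < (d + η) * m := hcard_lt m hNm
      have : ((T j n).card : ℝ) ≤ 2 * η * m + K := by linarith
      have h8 : 2 * η * (m : ℝ) ≤ 2 * η * 2 ^ (j + 1) :=
        mul_le_mul_of_nonneg_left hmR (by positivity)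
      have hKCc : (K : ℝ) ≤ Cc := by
        rw [hCcdef]; have : (0:ℝ) ≤ N := Nat.cast_nonneg N; linarith
      linarith
    · -- small block
      have h1 : (T j n).card ≤ m := by
        calc (T j n).card ≤ (Finset.range m).card := Finset.card_filter_le _ _
          _ = m := Finset.card_range m
      have h2 : ((T j n).card : ℝ) ≤ m := by exact_mod_cast h1
      have h3 : (m : ℝ) < N := by exact_mod_cast hNm
      have : (0:ℝ) ≤ 2 * η * 2 ^ (j + 1) := by positivity
      have hNCc : (N : ℝ) ≤ Cc := by
        rw [hCcdef]; have : (0:ℝ) ≤ K := Nat.cast_nonneg K; linarith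
      linarith
  -- geometric sum
  have hgeom : ∀ k : ℕ, ∑ j ∈ Finset.range (k + 1), (2:ℝ) ^ (j + 1) ≤ 4 * 2 ^ k := by
    intro k
    have h1 : ∑ j ∈ Finset.range (k + 1), (2:ℝ) ^ (j + 1)
        = 2 * ∑ j ∈ Finset.range (k + 1), (2:ℝ) ^ j := by
      rw [Finset.mul_sum]
      exact Finset.sum_congr rfl fun j _ => by ring
    have h2 : ∑ j ∈ Finset.range (k + 1), (2:ℝ) ^ j = 2 ^ (k + 1) - 1 := by
      have := geom_sum_eq (show (2:ℝ) ≠ 1 by norm_num) (k + 1)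
      rw [this]; norm_num
    rw [h1, h2]
    have : (0:ℝ) < 2 ^ k := by positivity
    calc 2 * ((2:ℝ) ^ (k + 1) - 1) ≤ 2 * 2 ^ (k + 1) := by linarith
      _ = 4 * 2 ^ k := by rw [pow_succ]; ring
  -- choose threshold M
  obtain ⟨M2, hM2⟩ : ∃ M2 : ℕ, (2 * (Cc + 1)) / η ≤ M2 :=
    ⟨Nat.ceil ((2 * (Cc + 1)) / η), Nat.le_ceil _⟩
  set M : ℕ := max 4 M2 with hMdef
  have hside : ∀ k : ℕ, M ≤ k → 1 + ((k : ℝ) + 1) * Cc ≤ η * 2 ^ k := by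
    intro k hk
    have hk4 : 4 ≤ k := le_trans (le_max_left _ _) hk
    have hkM2 : (M2 : ℝ) ≤ k := by exact_mod_cast le_trans (le_max_right _ _) hk
    have hk1 : (1 : ℝ) ≤ k := by exact_mod_cast le_trans (by norm_num) hk4
    have h1 : 1 + ((k : ℝ) + 1) * Cc ≤ ((k : ℝ) + 1) * (Cc + 1) := by nlinarith
    have h2 : ((k : ℝ) + 1) * (Cc + 1) ≤ 2 * k * (Cc + 1) := by nlinarith
    have h3 : 2 * (k : ℝ) * (Cc + 1) ≤ η * k ^ 2 := by
      have : 2 * (Cc + 1) ≤ η * k := by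
        have := le_trans hM2 hkM2
        rw [div_le_iff₀ hη0] at this
        linarith
      nlinarith
    have h4 : (k : ℝ) ^ 2 ≤ 2 ^ k := by
      have := sq_le_two_pow k hk4
      exact_mod_cast this
    have h5 : η * (k : ℝ) ^ 2 ≤ η * 2 ^ k := mul_le_mul_of_nonneg_left h4 (le_of_lt hη0)
    linarith
  -- eventual bound on the density of A \ B
  have h9 : ∀ᶠ n in atTop, pdens (A \ B) n ≤ 9 * η := by
    rw [eventually_atTop]
    refine ⟨max (2 ^ M) 1, fun n hn => ?_⟩
    have hn1 : 1 ≤ n := le_trans (le_max_right _ _) hn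
    have hnM : 2 ^ M ≤ n := le_trans (le_max_left _ _) hn
    have hn0 : (0 : ℝ) < n := by exact_mod_cast hn1
    set k := lg n with hkdef
    have hkM : M ≤ k := hlg_ge M n hnM
    have h2kn : (2 : ℝ) ^ k ≤ n := by
      exact_mod_cast hlg_low n (by omega)
    -- numerator bound
    have hnum : (((A \ B) ∩ Set.Iio n).ncard : ℝ) ≤ 1 + ((k : ℝ) + 1) * Cc + 8 * η * n := by
      have h1 := hDle n hn1
      have h1R : (((A \ B) ∩ Set.Iio n).ncard : ℝ) ≤
          1 + ∑ j ∈ Finset.range (k + 1), ((T j n).card : ℝ) := by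
        have : (((A \ B) ∩ Set.Iio n).ncard : ℝ) ≤
            ((1 + ∑ j ∈ Finset.range (k + 1), (T j n).card : ℕ) : ℝ) := by
          exact_mod_cast h1
        rw [Nat.cast_add, Nat.cast_sum] at this
        simpa using this
      have h2 : ∑ j ∈ Finset.range (k + 1), ((T j n).card : ℝ) ≤
          ∑ j ∈ Finset.range (k + 1), (2 * η * 2 ^ (j + 1) + Cc) :=
        Finset.sum_le_sum fun j _ => hTbound j n
      have h3 : ∑ j ∈ Finset.range (k + 1), (2 * η * (2:ℝ) ^ (j + 1) + Cc)
          = 2 * η * (∑ j ∈ Finset.range (k + 1), (2:ℝ) ^ (j + 1)) + ((k : ℝ) + 1) * Cc := by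
        rw [Finset.sum_add_distrib, ← Finset.mul_sum, Finset.sum_const, Finset.card_range]
        push_cast; ring
      have h4 : 2 * η * (∑ j ∈ Finset.range (k + 1), (2:ℝ) ^ (j + 1)) ≤
          2 * η * (4 * 2 ^ k) :=
        mul_le_mul_of_nonneg_left (hgeom k) (by positivity)
      have h5 : 2 * η * (4 * (2:ℝ) ^ k) ≤ 8 * η * n := by
        have : 2 * η * (4 * (2:ℝ) ^ k) = 8 * η * (2:ℝ) ^ k := by ring
        rw [this]
        exact mul_le_mul_of_nonneg_left h2kn (by positivity)
      linarith
    -- conclude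
    have hpd : pdens (A \ B) n = (((A \ B) ∩ Set.Iio n).ncard : ℝ) / n := rfl
    rw [hpd, div_le_iff₀ hn0]
    have hs := hside k hkM
    have : 1 + ((k : ℝ) + 1) * Cc ≤ η * n := le_trans hs
      (mul_le_mul_of_nonneg_left h2kn (le_of_lt hη0))
    linarith
  -- limsup bound
  have hcob : IsCoboundedUnder (· ≤ ·) atTop (pdens (A \ B)) := by
    apply isCoboundedUnder_le_of_le atTop (x := 0)
    intro n
    exact div_nonneg (Nat.cast_nonneg _) (Nat.cast_nonneg _)
  have hls : upperDensity (A \ B) ≤ 9 * η := limsup_le_of_le hcob h9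
  have : 9 * η < ε := by rw [hηdef]; linarith
  calc upperDensity (A \ B) ≤ 9 * η := hls
    _ < ε := this
end

section
/- If A ⊆ ℕ is an r-cohesive set (i.e., A is infinite and for every computable set S, at least one of A ∩ S and A ∩ (ℕ \ S) is finite), then A has asymptotic density 0. -/
open Filter

lemma modComputable (k j : ℕ) : ComputablePred (· ∈ {m : ℕ | m % k = j}) := by
  have : Computable fun m : ℕ => decide (m % k = j) :=
    Primrec.to_comp (PrimrecPred.decide (Primrec.eq.comp (Primrec.nat_mod.comp Primrec.id (Primrec.const k))
      (Primrec.const j)))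
  exact ⟨fun m => Nat.decEq _ _, this⟩

lemma countMod (k j n : ℕ) (hk : 0 < k) :
    ({m : ℕ | m % k = j} ∩ Set.Iio n).ncard ≤ n / k + 1 := by
  have hIio : (Set.Iio (n / k + 1)).ncard = n / k + 1 := by
    rw [← Finset.coe_Iio, Set.ncard_coe_finset, Nat.card_Iio]
  rw [← hIio]
  apply Set.ncard_le_ncard_of_injOn (fun m => m / k)
  · rintro m ⟨hmj, hmn⟩
    simp only [Set.mem_Iio] at hmn ⊢
    exact lt_of_le_of_lt (Nat.div_le_div_right hmn.le) (Nat.lt_succ_self _)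
  · rintro m₁ ⟨h₁, _⟩ m₂ ⟨h₂, _⟩ h
    simp only [Set.mem_setOf_eq] at h₁ h₂
    simp only at h
    calc m₁ = k * (m₁ / k) + m₁ % k := (Nat.div_add_mod m₁ k).symm
      _ = k * (m₂ / k) + m₂ % k := by rw [h₁, h₂, h]
      _ = m₂ := Nat.div_add_mod m₂ k

theorem stmt18 (A : Set ℕ) (hinf : A.Infinite)
    (hcoh : ∀ S : Set ℕ, ComputablePred (· ∈ S) → (A ∩ S).Finite ∨ (A ∩ Sᶜ).Finite) :
    Tendsto (pdens A) atTop (nhds 0) := by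
  have key : ∀ k : ℕ, 0 < k → ∃ j, (A \ {m : ℕ | m % k = j}).Finite := by
    intro k hk
    by_contra h
    push_neg at h
    have hall : ∀ j, (A ∩ {m : ℕ | m % k = j}).Finite := by
      intro j
      rcases hcoh _ (modComputable k j) with hf | hf
      · exact hf
      · exact absurd (hf.subset (by intro x hx; exact ⟨hx.1, hx.2⟩)) (h j)
    have : A ⊆ ⋃ j ∈ Finset.range k, (A ∩ {m : ℕ | m % k = j}) := by
      intro a ha
      exact Set.mem_biUnion (Finset.mem_range.mpr (Nat.mod_lt a hk)) ⟨ha, rfl⟩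
    exact hinf ((Set.Finite.biUnion (Finset.range k).finite_toSet fun j _ => hall j).subset this)
  rw [NormedAddCommGroup.tendsto_nhds_zero]
  intro ε hε
  obtain ⟨k, hk⟩ := exists_nat_gt (2 / ε)
  have hk0 : 0 < k := by
    by_contra h
    push_neg at h
    interval_cases k
    · simp at hk
      linarith [div_pos (by norm_num : (0:ℝ) < 2) hε]
  obtain ⟨j, hfin⟩ := key k hk0
  set c : ℕ := (A \ {m : ℕ | m % k = j}).ncard with hc
  obtain ⟨N, hN⟩ := exists_nat_gt (2 * (1 + (c : ℝ)) / ε)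
  filter_upwards [eventually_gt_atTop N] with n hn
  have hn0 : 0 < n := lt_of_le_of_lt (Nat.zero_le N) hn
  have hnR : (0:ℝ) < n := by exact_mod_cast hn0
  have hkR : (0:ℝ) < k := by exact_mod_cast hk0
  -- counting bound
  have hcount : (A ∩ Set.Iio n).ncard ≤ (n / k + 1) + c := by
    have hsub : A ∩ Set.Iio n ⊆ ({m : ℕ | m % k = j} ∩ Set.Iio n) ∪ (A \ {m : ℕ | m % k = j}) := by
      rintro m ⟨hmA, hmn⟩
      by_cases hm : m % k = j
      · exact Or.inl ⟨hm, hmn⟩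
      · exact Or.inr ⟨hmA, hm⟩
    calc (A ∩ Set.Iio n).ncard
        ≤ (({m : ℕ | m % k = j} ∩ Set.Iio n) ∪ (A \ {m : ℕ | m % k = j})).ncard :=
          Set.ncard_le_ncard hsub (((Set.finite_Iio n).inter_of_right _).union hfin)
      _ ≤ ({m : ℕ | m % k = j} ∩ Set.Iio n).ncard + c :=
          Set.ncard_union_le _ _
      _ ≤ (n / k + 1) + c := by
          exact Nat.add_le_add_right (countMod k j n hk0) c
  have hpd : pdens A n ≤ ((n:ℝ) / k + (1 + c)) / n := by
    unfold pdens
    gcongr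
    have h1 : ((A ∩ Set.Iio n).ncard : ℝ) ≤ ((n / k + 1 + c : ℕ) : ℝ) := by
      exact_mod_cast hcount
    refine h1.trans ?_
    push_cast
    have := Nat.cast_div_le (m := n) (n := k) (α := ℝ)
    linarith
  have heq : ((n:ℝ) / k + (1 + c)) / n = 1 / k + (1 + c) / n := by
    field_simp
  have h1k : (1:ℝ) / k < ε / 2 := by
    rw [div_lt_div_iff₀ hkR (by norm_num : (0:ℝ) < 2)]
    have : 2 / ε < (k:ℝ) := hk
    rw [div_lt_iff₀ hε] at this
    linarith
  have h2 : (1 + (c:ℝ)) / n < ε / 2 := by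
    rw [div_lt_div_iff₀ hnR (by norm_num : (0:ℝ) < 2)]
    have hNn : (N:ℝ) < n := by exact_mod_cast hn
    have : 2 * (1 + (c:ℝ)) / ε < n := lt_trans hN hNn
    rw [div_lt_iff₀ hε] at this
    linarith
  have hnonneg : 0 ≤ pdens A n := by
    unfold pdens
    positivity
  rw [Real.norm_eq_abs, abs_of_nonneg hnonneg]
  calc pdens A n ≤ 1 / k + (1 + c) / n := by rw [← heq]; exact hpd
    _ < ε / 2 + ε / 2 := by linarith
    _ = ε := by ring
end
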